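/- arXiv:1004.2223 — 2 statements merged into one kernel-verified Lean document; each statement's English description precedes it below -/
import Mathlib

section
/- Let $f_{\mathbf v}(x) = \prod_{i=1}^m (x - v_i) = \sum_{j=0}^m (-1)^{m-j} e_{m-j} x^j$ where $e_j$ are the elementary symmetric polynomials in $v_1, \dots, v_m$. In the affine Hecke algebra $H_2^{\mathrm{aff}}$ over $A = \mathbb{Z}[q^{\pm1}, v_1^{\pm1}, \dots, v_m^{\pm1}]$, setting $f_2 = T f_{\mathbf v}(X_1) T$, one has $q f_{\mathbf v}(X_2) = f_2 + (q-1) z T$ where $z = (-1)^{m+1} e_m + X_1 X_2 \sum_{j=0}^{m-2} (-1)^j e_j H_{m-2-j}$ and $H_k = \sum_{i=0}^k X_1^i X_2^{k-i}$. -/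
noncomputable section

/-- The ring `A = ℤ[q^{±1}, v₁^{±1}, …, v_m^{±1}]`, realized as the group
algebra of `ℤ × ℤ^m` over `ℤ`. -/
abbrev Av (m : ℕ) : Type := AddMonoidAlgebra ℤ (ℤ × (Fin m → ℤ))

/-- The element `q`. -/
def qv (m : ℕ) : Av m := AddMonoidAlgebra.single (1, 0) 1

/-- The element `vᵢ`. -/
def vv (m : ℕ) (i : Fin m) : Av m := AddMonoidAlgebra.single (0, Pi.single i 1) 1

/-- The `j`-th elementary symmetric polynomial of `v₁, …, v_m`. -/
def ev (m : ℕ) (j : ℕ) : Av m :=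
  ∑ s ∈ Finset.powersetCard j (Finset.univ : Finset (Fin m)), ∏ i ∈ s, vv m i

/-- The Laurent polynomial ring `A[X₁^{±1}, X₂^{±1}]`. -/
abbrev Lau (A : Type) [CommRing A] : Type := AddMonoidAlgebra A (ℤ × ℤ)

variable (A : Type) [CommRing A]

/-- The monomial `X₁^i X₂^j`. -/
def Xm (i j : ℤ) : Lau A := AddMonoidAlgebra.single (i, j) 1

/-- The automorphism `s` interchanging `X₁` and `X₂`. -/
def sw (p : Lau A) : Lau A := AddMonoidAlgebra.ofCoeff (Finsupp.equivMapDomain (Equiv.prodComm ℤ ℤ) p.coeff)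

/-- Constants. -/
def CC (a : A) : Lau A := algebraMap A (Lau A) a

/-- `p` is `m`-restricted. -/
def Res (m : ℕ) (p : Lau A) : Prop :=
  ∀ ab ∈ p.coeff.support, 0 ≤ ab.1 ∧ ab.1 ≤ (m : ℤ) - 1 ∧ 0 ≤ ab.2 ∧ ab.2 ≤ (m : ℤ) - 1

/-- `f_v(X₁) = ∏ᵢ (X₁ - vᵢ)`. -/
def fv1 (m : ℕ) : Lau (Av m) := ∏ i : Fin m, (Xm (Av m) 1 0 - CC (Av m) (vv m i))

/-- `f_v(X₂) = ∏ᵢ (X₂ - vᵢ)`. -/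
def fv2 (m : ℕ) : Lau (Av m) := ∏ i : Fin m, (Xm (Av m) 0 1 - CC (Av m) (vv m i))

/-- The complete homogeneous symmetric polynomial `H_k` in `X₁, X₂`. -/
def Hc (k : ℕ) : Lau A := ∑ i ∈ Finset.range (k + 1), Xm A (i : ℤ) ((k : ℤ) - (i : ℤ))

/-- The element `z = (-1)^{m+1} e_m + X₁X₂ ∑_{j=0}^{m-2} (-1)^j e_j H_{m-2-j}`. -/
def zel (m : ℕ) : Lau (Av m) :=
  CC (Av m) ((-1 : Av m) ^ (m + 1) * ev m m) +
    Xm (Av m) 1 1 *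
      ∑ j ∈ Finset.range (m - 1), CC (Av m) ((-1 : Av m) ^ j * ev m j) * Hc (Av m) (m - 2 - j)


/-! ### Auxiliary lemmas -/

open Finset in
lemma vieta {R : Type*} [CommRing R] {m : ℕ} (c : Fin m → R) (y : R) :
    ∏ i : Fin m, (y - c i) =
      ∑ j ∈ range (m+1), (-1:R)^j * (∑ s ∈ powersetCard j (univ : Finset (Fin m)), ∏ i ∈ s, c i) * y^(m-j) := by
  have h := Multiset.prod_X_add_C_eq_sum_esymm ((univ : Finset (Fin m)).val.map (fun i => -c i))
  have hcard : Multiset.card ((univ : Finset (Fin m)).val.map (fun i => -c i)) = m := by simp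
  rw [hcard] at h
  have h2 := congrArg (Polynomial.eval y) h
  simp only [Polynomial.eval_multiset_prod, Multiset.map_map, Function.comp,
    Polynomial.eval_add, Polynomial.eval_X, Polynomial.eval_C, Polynomial.eval_finset_sum,
    Polynomial.eval_mul, Polynomial.eval_pow] at h2
  rw [show ∏ i : Fin m, (y - c i) = (Multiset.map (fun i => y + -c i) (univ : Finset (Fin m)).val).prod from by
    rw [Finset.prod]; congr 1; simp [sub_eq_add_neg]]
  rw [h2]
  refine Finset.sum_congr rfl fun j hj => ?_
  rw [Finset.esymm_map_val]
  rw [Finset.sum_mul, Finset.mul_sum, Finset.sum_mul]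
  refine Finset.sum_congr rfl fun s hs => ?_
  have hsc : s.card = j := (Finset.mem_powersetCard.mp hs).2
  have : ∏ i ∈ s, (-c i) = (-1:R)^j * ∏ i ∈ s, c i := by
    rw [← hsc]
    calc ∏ i ∈ s, (-c i) = ∏ i ∈ s, ((-1:R) * c i) := by
          refine Finset.prod_congr rfl fun i _ => by ring
      _ = (-1:R)^s.card * ∏ i ∈ s, c i := by rw [Finset.prod_mul_distrib, Finset.prod_const]
  rw [this]

lemma Xm_mul (a b c d : ℤ) : Xm A a b * Xm A c d = Xm A (a+c) (b+d) := by
  simp [Xm, AddMonoidAlgebra.single_mul_single]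

lemma Xm_zero : Xm A 0 0 = 1 := rfl

lemma Xm_congr {a b c d : ℤ} (h1 : a = c) (h2 : b = d) : Xm A a b = Xm A c d := by
  rw [h1, h2]

lemma Xm_mul' (a b c d e f : ℤ) (h1 : a + c = e) (h2 : b + d = f) :
    Xm A a b * Xm A c d = Xm A e f := by rw [Xm_mul, h1, h2]

lemma Xm_pow (a b : ℤ) (n : ℕ) : Xm A a b ^ n = Xm A (n*a) (n*b) := by
  simp [Xm, AddMonoidAlgebra.single_pow]

lemma sw_eq (p : Lau A) :
    sw A p = AddMonoidAlgebra.domCongr A A (AddEquiv.prodComm : ℤ × ℤ ≃+ ℤ × ℤ) p := by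
  apply AddMonoidAlgebra.coeff_injective
  ext x
  simp [sw]

lemma sw_Xm (a b : ℤ) : sw A (Xm A a b) = Xm A b a := by
  rw [sw_eq]
  simp [Xm, AddMonoidAlgebra.domCongr_single]

lemma sw_CC (a : A) : sw A (CC A a) = CC A a := by
  rw [sw_eq]
  exact (AddMonoidAlgebra.domCongr A A (AddEquiv.prodComm : ℤ × ℤ ≃+ ℤ × ℤ)).commutes a

lemma sw_fv1 (m : ℕ) : sw (Av m) (fv1 m) = fv2 m := by
  rw [sw_eq, fv1, fv2, map_prod]
  refine Finset.prod_congr rfl fun i _ => ?_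
  rw [map_sub, ← sw_eq, ← sw_eq, sw_Xm, sw_CC]

/-- The "divided difference" polynomial `S`. -/
def Sp (m : ℕ) : Lau (Av m) :=
  ∑ j ∈ Finset.range m, (-1 : Lau (Av m))^j * CC (Av m) (ev m j) * Hc (Av m) (m - 1 - j)

lemma CC_ev (m : ℕ) (j : ℕ) :
    CC (Av m) (ev m j) =
      ∑ s ∈ Finset.powersetCard j (Finset.univ : Finset (Fin m)), ∏ i ∈ s, CC (Av m) (vv m i) := by
  rw [CC, ev, map_sum]
  exact Finset.sum_congr rfl fun s _ => map_prod _ _ _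

lemma fv2_eq (m : ℕ) :
    fv2 m = ∑ j ∈ Finset.range (m+1),
      (-1 : Lau (Av m))^j * CC (Av m) (ev m j) * Xm (Av m) 0 ((m:ℤ)-(j:ℤ)) := by
  rw [fv2, vieta]
  refine Finset.sum_congr rfl fun j hj => ?_
  have hj' : j ≤ m := Nat.lt_succ_iff.mp (Finset.mem_range.mp hj)
  rw [CC_ev, Xm_pow,
    Xm_congr (Av m) (show ((m-j:ℕ):ℤ)*0 = 0 by ring)
      (show ((m-j:ℕ):ℤ)*1 = (m:ℤ)-(j:ℤ) by push_cast [Nat.cast_sub hj']; ring)]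

lemma fv1_eq (m : ℕ) :
    fv1 m = ∑ j ∈ Finset.range (m+1),
      (-1 : Lau (Av m))^j * CC (Av m) (ev m j) * Xm (Av m) ((m:ℤ)-(j:ℤ)) 0 := by
  rw [fv1, vieta]
  refine Finset.sum_congr rfl fun j hj => ?_
  have hj' : j ≤ m := Nat.lt_succ_iff.mp (Finset.mem_range.mp hj)
  rw [CC_ev, Xm_pow,
    Xm_congr (Av m) (show ((m-j:ℕ):ℤ)*1 = (m:ℤ)-(j:ℤ) by push_cast [Nat.cast_sub hj']; ring)
      (show ((m-j:ℕ):ℤ)*0 = 0 by ring)]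

lemma Hc_zero : Hc A 0 = 1 := by
  simp [Hc, Xm_zero]

lemma Hc_succ (k : ℕ) : Hc A (k+1) = Xm A 1 0 * Hc A k + Xm A 0 ((k:ℤ)+1) := by
  rw [Hc, Finset.sum_range_succ']
  rw [Hc, Finset.mul_sum]
  congr 1
  · refine Finset.sum_congr rfl fun i _ => ?_
    exact (Xm_mul' A 1 0 (i:ℤ) ((k:ℤ)-(i:ℤ)) ((i+1:ℕ):ℤ) (((k+1:ℕ):ℤ)-((i+1:ℕ):ℤ))
      (by push_cast; ring) (by push_cast; ring)).symm

lemma YX_Hc (k : ℕ) :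
    (Xm A 0 1 - Xm A 1 0) * Hc A k = Xm A 0 ((k:ℤ)+1) - Xm A ((k:ℤ)+1) 0 := by
  induction k with
  | zero => rw [Hc_zero, mul_one]; norm_num
  | succ n ih =>
    rw [Hc_succ]
    have hy : Xm A 0 1 * Xm A 0 ((n:ℤ)+1) = Xm A 0 (((n+1:ℕ):ℤ)+1) :=
      Xm_mul' A _ _ _ _ _ _ (by norm_num) (by push_cast; ring)
    have hx : Xm A 1 0 * Xm A ((n:ℤ)+1) 0 = Xm A (((n+1:ℕ):ℤ)+1) 0 :=
      Xm_mul' A _ _ _ _ _ _ (by push_cast; ring) (by norm_num)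
    linear_combination (Xm A 1 0) * ih + hy - hx

lemma Y_Hc (k : ℕ) :
    Xm A 0 1 * Hc A (k+1) = Xm A 0 ((k:ℤ)+2) + Xm A 1 1 * Hc A k := by
  rw [Hc_succ]
  have hy : Xm A 0 1 * Xm A 0 ((k:ℤ)+1) = Xm A 0 ((k:ℤ)+2) :=
    Xm_mul' A _ _ _ _ _ _ (by norm_num) (by ring)
  have hxy : Xm A 0 1 * Xm A 1 0 = Xm A 1 1 :=
    Xm_mul' A _ _ _ _ _ _ (by norm_num) (by norm_num)
  linear_combination hy + Hc A k * hxy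

open Finset in
lemma identA (m : ℕ) : (Xm (Av m) 0 1 - Xm (Av m) 1 0) * Sp m = fv2 m - fv1 m := by
  have step : ∀ j ∈ range m,
      (Xm (Av m) 0 1 - Xm (Av m) 1 0) * ((-1 : Lau (Av m))^j * CC (Av m) (ev m j) * Hc (Av m) (m-1-j))
        = (-1 : Lau (Av m))^j * CC (Av m) (ev m j) * Xm (Av m) 0 ((m:ℤ)-(j:ℤ))
          - (-1 : Lau (Av m))^j * CC (Av m) (ev m j) * Xm (Av m) ((m:ℤ)-(j:ℤ)) 0 := by
    intro j hj
    have hj' : j < m := Finset.mem_range.mp hj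
    have hYX := YX_Hc (Av m) (m-1-j)
    rw [show ((m-1-j : ℕ) : ℤ) + 1 = (m:ℤ) - (j:ℤ) by omega] at hYX
    linear_combination ((-1 : Lau (Av m))^j * CC (Av m) (ev m j)) * hYX
  calc (Xm (Av m) 0 1 - Xm (Av m) 1 0) * Sp m
      = ∑ j ∈ range m, ((-1 : Lau (Av m))^j * CC (Av m) (ev m j) * Xm (Av m) 0 ((m:ℤ)-(j:ℤ))
          - (-1 : Lau (Av m))^j * CC (Av m) (ev m j) * Xm (Av m) ((m:ℤ)-(j:ℤ)) 0) := by
        rw [Sp, Finset.mul_sum]; exact Finset.sum_congr rfl step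
    _ = (∑ j ∈ range m, (-1 : Lau (Av m))^j * CC (Av m) (ev m j) * Xm (Av m) 0 ((m:ℤ)-(j:ℤ)))
        - ∑ j ∈ range m, (-1 : Lau (Av m))^j * CC (Av m) (ev m j) * Xm (Av m) ((m:ℤ)-(j:ℤ)) 0 := by
        rw [Finset.sum_sub_distrib]
    _ = fv2 m - fv1 m := by
        rw [fv2_eq, fv1_eq, Finset.sum_range_succ, Finset.sum_range_succ, sub_self ((m:ℤ))]
        ring

open Finset in
lemma identB (m : ℕ) (hm : 1 ≤ m) : Xm (Av m) 0 1 * Sp m = fv2 m + zel m := by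
  obtain ⟨n, rfl⟩ : ∃ n, m = n + 1 := ⟨m - 1, by omega⟩
  have step : ∀ j ∈ range n,
      Xm (Av (n+1)) 0 1 * ((-1 : Lau (Av (n+1)))^j * CC (Av (n+1)) (ev (n+1) j) * Hc (Av (n+1)) (n+1-1-j))
        = (-1 : Lau (Av (n+1)))^j * CC (Av (n+1)) (ev (n+1) j) * Xm (Av (n+1)) 0 (((n+1:ℕ):ℤ)-(j:ℤ))
          + Xm (Av (n+1)) 1 1 * ((-1 : Lau (Av (n+1)))^j * CC (Av (n+1)) (ev (n+1) j) * Hc (Av (n+1)) (n+1-2-j)) := by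
    intro j hj
    have hj' : j < n := Finset.mem_range.mp hj
    have h1 : n+1-1-j = (n+1-2-j) + 1 := by omega
    have hyh := Y_Hc (Av (n+1)) (n+1-2-j)
    rw [← h1] at hyh
    rw [show ((n+1-2-j : ℕ) : ℤ) + 2 = ((n+1:ℕ):ℤ) - (j:ℤ) by omega] at hyh
    linear_combination ((-1 : Lau (Av (n+1)))^j * CC (Av (n+1)) (ev (n+1) j)) * hyh
  have hCC : ∀ j : ℕ, CC (Av (n+1)) ((-1 : Av (n+1))^j * ev (n+1) j)
      = (-1 : Lau (Av (n+1)))^j * CC (Av (n+1)) (ev (n+1) j) := by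
    intro j
    rw [CC, map_mul, map_pow, map_neg, map_one]; rfl
  have hC2 : CC (Av (n+1)) ((-1 : Av (n+1))^(n+1+1) * ev (n+1) (n+1))
      = (-1 : Lau (Av (n+1)))^(n+1+1) * CC (Av (n+1)) (ev (n+1) (n+1)) := by
    rw [CC, map_mul, map_pow, map_neg, map_one]; rfl
  rw [Sp, Finset.mul_sum, Finset.sum_range_succ, Finset.sum_congr rfl step,
    Finset.sum_add_distrib]
  rw [show n+1-1-n = 0 from by omega, Hc_zero, mul_one]
  rw [fv2_eq, Finset.sum_range_succ, Finset.sum_range_succ, zel, Nat.add_sub_cancel]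
  have hzs : (∑ j ∈ range n, CC (Av (n+1)) ((-1 : Av (n+1))^j * ev (n+1) j) * Hc (Av (n+1)) (n+1-2-j))
      = ∑ j ∈ range n, (-1 : Lau (Av (n+1)))^j * CC (Av (n+1)) (ev (n+1) j) * Hc (Av (n+1)) (n+1-2-j) :=
    Finset.sum_congr rfl fun j _ => by rw [hCC j]
  rw [hzs, hC2]
  rw [show (((n+1:ℕ)):ℤ) - ((n:ℕ):ℤ) = 1 by push_cast; ring, sub_self (((n+1:ℕ)):ℤ), Xm_zero]
  have hms : (∑ j ∈ range n, Xm (Av (n+1)) 1 1 *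
        ((-1 : Lau (Av (n+1)))^j * CC (Av (n+1)) (ev (n+1) j) * Hc (Av (n+1)) (n+1-2-j)))
      = Xm (Av (n+1)) 1 1 * ∑ j ∈ range n,
        (-1 : Lau (Av (n+1)))^j * CC (Av (n+1)) (ev (n+1) j) * Hc (Av (n+1)) (n+1-2-j) :=
    (Finset.mul_sum _ _ _).symm
  linear_combination hms

lemma keyg (m : ℕ) (hm : 1 ≤ m) :
    (-(fv2 m + zel m)) * (1 - Xm (Av m) 1 0 * Xm (Av m) 0 (-1)) = fv1 m - sw (Av m) (fv1 m) := by
  rw [sw_fv1]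
  have hA := identA m
  have hB := identB m hm
  have h2 : Xm (Av m) 0 1 * Xm (Av m) 0 (-1) = 1 := by
    rw [Xm_mul' (Av m) 0 1 0 (-1) 0 0 (by ring) (by ring)]; exact Xm_zero (Av m)
  linear_combination (1 - Xm (Av m) 1 0 * Xm (Av m) 0 (-1)) * hB - hA + (Xm (Av m) 1 0 * Sp m) * h2

/- STATEMENT 9 -/
theorem stmt9 (m : ℕ) (hm : 1 ≤ m) (H : Type) [Ring H] [Algebra (Av m) H]
    (ι : Lau (Av m) →ₐ[Av m] H) (T : H)
    (hinj : Function.Injective ι)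
    (hfree : ∀ h : H, ∃! fg : Lau (Av m) × Lau (Av m), h = ι fg.1 + ι fg.2 * T)
    (hquad : (T - algebraMap (Av m) H (qv m)) * (T + 1) = 0)
    (hTX : T * ι (Xm (Av m) 1 0) * T = algebraMap (Av m) H (qv m) * ι (Xm (Av m) 0 1))
    (hcomm : ∀ f g : Lau (Av m),
      g * (1 - Xm (Av m) 1 0 * Xm (Av m) 0 (-1)) = f - sw (Av m) f →
      T * ι f = ι (sw (Av m) f) * T + algebraMap (Av m) H (qv m - 1) * ι g) :
    algebraMap (Av m) H (qv m) * ι (fv2 m) =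
      T * ι (fv1 m) * T + algebraMap (Av m) H (qv m - 1) * (ι (zel m) * T) := by
  set Q : H := algebraMap (Av m) H (qv m) with hQ
  have hQ1 : algebraMap (Av m) H (qv m - 1) = Q - 1 := by rw [map_sub, map_one]
  rw [hQ1]
  set g : Lau (Av m) := -(fv2 m + zel m) with hg
  have hc := hcomm (fv1 m) g (keyg m hm)
  rw [sw_fv1, hQ1] at hc
  have hT2 : T * T = (Q - 1) * T + Q := by
    have h := hquad
    rw [sub_mul, mul_add, mul_add, mul_one, mul_one, sub_eq_zero] at h
    have h' : T * T = Q * T + Q - T := eq_sub_of_add_eq h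
    rw [h']
    noncomm_ring
  have hcen : ∀ x y : H, x * (Q * y) = Q * (x * y) := by
    intro x y
    rw [← mul_assoc, ← Algebra.commutes (qv m) x, ← hQ, mul_assoc]
  have hcen1 : ∀ x : H, x * Q = Q * x := by
    intro x
    have h2 := hcen x 1
    rwa [mul_one, mul_one] at h2
  set a : H := ι (fv2 m)
  set b : H := ι g
  set c : H := ι (zel m)
  have habc : a + b + c = 0 := by
    rw [show a + b + c = ι (fv2 m + g + zel m) by rw [map_add, map_add],
      show fv2 m + g + zel m = 0 by rw [hg]; ring, map_zero]
  calc Q * a = Q * a + (Q - 1) * ((a + b + c) * T) := by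
        rw [habc, zero_mul, mul_zero, add_zero]
    _ = T * ι (fv1 m) * T + (Q - 1) * (c * T) := by
        rw [hc]
        have e1 : (a * T + (Q - 1) * b) * T = a * (T * T) + (Q - 1) * (b * T) := by
          noncomm_ring
        rw [e1, hT2]
        have e2 : a * ((Q - 1) * T + Q) = (Q - 1) * (a * T) + Q * a := by
          calc a * ((Q - 1) * T + Q) = a * (Q * T) - a * T + a * Q := by noncomm_ring
            _ = Q * (a * T) - a * T + Q * a := by rw [hcen a T, hcen1 a]
            _ = (Q - 1) * (a * T) + Q * a := by noncomm_ring
        rw [e2]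
        noncomm_ring
end
end

section
/- Let $\mathcal{K}_2^{\mathbf v} = H_2^{\mathrm{aff}}/J_{\mathbf v}$ be the cyclotomic Hecke algebra of type $G(m,1,2)$ over $A = \mathbb{Z}[q^{\pm1}, v_1^{\pm1},\dots,v_m^{\pm1}]$, with basis theorem $\mathcal{K}_2^{\mathbf v} = R_m \oplus R_m T$ where $R_m$ is the image of the $m$-restricted polynomials. If $z = f + gT$ (with $f, g \in R_m$) commutes with $T$, then both $f$ and $g$ are symmetric: $f = {}^s f$ and $g = {}^s g$. Conversely if $f, g$ are symmetric then $f + gT$ commutes with $T$. -/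
noncomputable section

variable (A : Type) [CommRing A]

-- ===== Auxiliary development =====

theorem Xm_mul_s12 (i j k l : ℤ) : Xm A i j * Xm A k l = Xm A (i+k) (j+l) := by
  unfold Xm
  rw [AddMonoidAlgebra.single_mul_single, one_mul]
  rfl

theorem CC_eq (a : A) : CC A a = AddMonoidAlgebra.single 0 a := rfl

/-- Demazure on a monomial. -/
def Dmono (a b : ℤ) : Lau A :=
  if a < b then ∑ k ∈ Finset.Ico a b, Xm A k (a+b-k)
  else -∑ k ∈ Finset.Ico b a, Xm A k (a+b-k)

theorem tele {M : Type*} [AddCommGroup M] (G : ℤ → M) (a : ℤ) :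
    ∀ b : ℤ, a ≤ b → ∑ k ∈ Finset.Ico a b, (G k - G (k+1)) = G a - G b := by
  intro b hb
  refine Int.le_induction (m := a)
    (motive := fun n _ => ∑ k ∈ Finset.Ico a n, (G k - G (k+1)) = G a - G n) ?_ ?_ b hb
  · simp
  · intro n hn ih
    have hins : Finset.Ico a (n+1) = insert n (Finset.Ico a n) := by
      ext x
      simp [Finset.mem_Ico, Finset.mem_insert]
      omega
    rw [hins, Finset.sum_insert (by simp), ih]
    abel

theorem telesc (a b : ℤ) (h : a ≤ b) (S : ℤ) :
    (∑ k ∈ Finset.Ico a b, Xm A k (S-k)) * (1 - Xm A 1 (-1)) =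
      Xm A a (S-a) - Xm A b (S-b) := by
  rw [Finset.sum_mul]
  have : ∀ k : ℤ, Xm A k (S-k) * (1 - Xm A 1 (-1)) = Xm A k (S-k) - Xm A (k+1) (S-(k+1)) := by
    intro k
    rw [mul_sub, mul_one, Xm_mul_s12]
    ring_nf
  simp only [this]
  exact tele (fun k => Xm A k (S-k)) a b h

theorem Dmono_mul (a b : ℤ) :
    Dmono A a b * (1 - Xm A 1 (-1)) = Xm A a b - Xm A b a := by
  unfold Dmono
  by_cases h : a < b
  · rw [if_pos h]
    have := telesc A a b h.le (a+b)
    simpa [show a+b-a = b by ring, show a+b-b = a by ring] using this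
  · rw [if_neg h, neg_mul]
    have := telesc A b a (not_lt.mp h) (a+b)
    rw [this]
    have h1 : a+b-b = a := by ring
    have h2 : a+b-a = b := by ring
    rw [h1, h2]
    abel

/-- Demazure operator. -/
def Dm (p : Lau A) : Lau A := p.coeff.sum fun ab c => c • Dmono A ab.1 ab.2

theorem smul_Xm (c : A) (a b : ℤ) :
    c • Xm A a b = AddMonoidAlgebra.single (a, b) c := by
  unfold Xm
  rw [AddMonoidAlgebra.smul_single, smul_eq_mul, mul_one]

theorem sw_single (a b : ℤ) (c : A) :
    sw A (AddMonoidAlgebra.single (a, b) c) = AddMonoidAlgebra.single (b, a) c := by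
  unfold sw
  rw [AddMonoidAlgebra.coeff_single, Finsupp.equivMapDomain_single]
  rfl

theorem sw_eq_sum (p : Lau A) :
    sw A p = p.coeff.sum fun ab c => AddMonoidAlgebra.single (ab.2, ab.1) c := by
  unfold sw
  rw [Finsupp.equivMapDomain_eq_mapDomain, Finsupp.mapDomain, AddMonoidAlgebra.ofCoeff_finsuppSum]
  rfl

theorem Dm_mul (p : Lau A) : Dm A p * (1 - Xm A 1 (-1)) = p - sw A p := by
  unfold Dm
  rw [Finsupp.sum, Finset.sum_mul]
  have : ∀ ab ∈ p.coeff.support, (p.coeff ab) • Dmono A ab.1 ab.2 * (1 - Xm A 1 (-1)) =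
      AddMonoidAlgebra.single ab (p.coeff ab) - AddMonoidAlgebra.single (ab.2, ab.1) (p.coeff ab) := by
    intro ab _
    rw [smul_mul_assoc, Dmono_mul, smul_sub, smul_Xm, smul_Xm]
  rw [Finset.sum_congr rfl this, Finset.sum_sub_distrib, sw_eq_sum, Finsupp.sum]
  congr 1
  conv_rhs => rw [← AddMonoidAlgebra.sum_coeff_single p]
  rfl

theorem Res_add {m : ℕ} {p r : Lau A} (hp : Res A m p) (hr : Res A m r) :
    Res A m (p + r) := by
  intro ab hab
  rcases Finset.mem_union.mp (Finsupp.support_add hab) with h | h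
  · exact hp ab h
  · exact hr ab h

theorem Res_sw {m : ℕ} {p : Lau A} (hp : Res A m p) : Res A m (sw A p) := by
  intro ab hab
  have : p.coeff (ab.2, ab.1) ≠ 0 := by
    have := Finsupp.mem_support_iff.mp hab
    exact this
  have h2 := hp (ab.2, ab.1) (Finsupp.mem_support_iff.mpr this)
  exact ⟨h2.2.2.1, h2.2.2.2, h2.1, h2.2.1⟩

theorem Res_CC_mul {m : ℕ} (a : A) {p : Lau A} (hp : Res A m p) :
    Res A m (CC A a * p) := by
  intro ab hab
  apply hp
  have : CC A a * p = a • p := by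
    rw [CC]; exact (Algebra.smul_def a p).symm
  rw [this] at hab
  exact Finsupp.support_smul hab

theorem Dmono_support {a b : ℤ} {x : ℤ × ℤ} (hx : x ∈ (Dmono A a b).coeff.support) :
    min a b ≤ x.1 ∧ x.1 < max a b ∧ x.1 + x.2 = a + b := by
  have key : ∀ (c d : ℤ), x ∈ (∑ k ∈ Finset.Ico c d, Xm A k (a+b-k)).coeff.support →
      c ≤ x.1 ∧ x.1 < d ∧ x.1 + x.2 = a + b := by
    intro c d hmem
    rw [AddMonoidAlgebra.coeff_sum] at hmem
    obtain ⟨k, hk, hxk⟩ := Finset.mem_biUnion.mp (Finsupp.support_finset_sum hmem)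
    have : x ∈ ({((k : ℤ), a+b-k)} : Finset (ℤ × ℤ)) := Finsupp.support_single_subset hxk
    have hx' : x = (k, a+b-k) := Finset.mem_singleton.mp this
    rw [Finset.mem_Ico] at hk
    subst hx'
    exact ⟨hk.1, hk.2, by ring⟩
  unfold Dmono at hx
  by_cases h : a < b
  · rw [if_pos h] at hx
    have := key a b hx
    omega
  · rw [if_neg h, AddMonoidAlgebra.coeff_neg, Finsupp.support_neg] at hx
    have := key b a hx
    omega

theorem Res_Dm {m : ℕ} {p : Lau A} (hp : Res A m p) : Res A m (Dm A p) := by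
  intro ab hab
  unfold Dm at hab
  rw [AddMonoidAlgebra.coeff_finsuppSum] at hab
  obtain ⟨x, hx, habx⟩ := Finset.mem_biUnion.mp (Finsupp.support_sum hab)
  have habx' : ab ∈ (Dmono A x.1 x.2).coeff.support := Finsupp.support_smul habx
  have h1 := Dmono_support A habx'
  have h2 := hp x hx
  constructor
  · omega
  constructor
  · omega
  constructor
  · omega
  · omega


/-- Augmentation map. -/
def eps (m : ℕ) : Lau (Av m) →ₐ[Av m] Av m :=
  AddMonoidAlgebra.lift (Av m) (Av m) (ℤ × ℤ) 1

theorem eps_single (m : ℕ) (x : ℤ × ℤ) (a : Av m) :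
    eps m (AddMonoidAlgebra.single x a) = a := by
  simp [eps, AddMonoidAlgebra.lift_single]

theorem qone (m : ℕ) : qv m - 1 ≠ 0 := by
  intro h
  have h2 : qv m = 1 := sub_eq_zero.mp h
  rw [qv, AddMonoidAlgebra.one_def] at h2
  rcases AddMonoidAlgebra.single_inj.mp h2 with ⟨h3, _⟩ | ⟨h3, _⟩
  · exact one_ne_zero (congrArg Prod.fst h3)
  · exact one_ne_zero h3

theorem wne (m : ℕ) : CC (Av m) (qv m) * (1 - Xm (Av m) 1 (-1))^2
    - CC (Av m) (qv m - 1)^2 * Xm (Av m) 1 (-1) ≠ 0 := by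
  intro h
  have h2 := congrArg (eps m) h
  rw [map_sub, map_mul, map_mul, map_pow, map_sub, map_one, map_pow, map_zero] at h2
  rw [CC_eq, CC_eq, Xm] at h2
  rw [eps_single, eps_single, eps_single] at h2
  have h3 : (qv m - 1)^2 = 0 := by linear_combination -h2
  exact qone m (pow_eq_zero_iff (n := 2) (by norm_num) |>.mp h3)

/- STATEMENT 12: in the cyclotomic Hecke algebra 𝒦₂^v = H₂^aff/J_v of type
G(m,1,2) (with its basis theorem: every element is uniquely ι f + ι g · T with
f, g m-restricted), an element f + gT with f, g ∈ R_m commutes with T if and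
only if f and g are both symmetric. -/
theorem stmt12 (m : ℕ)
    (K : Type) [Ring K] [Algebra (Av m) K]
    (ι : Lau (Av m) →ₐ[Av m] K) (T : K)
    (hquad : (T - algebraMap (Av m) K (qv m)) * (T + 1) = 0)
    (hTX : T * ι (Xm (Av m) 1 0) * T = algebraMap (Av m) K (qv m) * ι (Xm (Av m) 0 1))
    (hcomm : ∀ f g : Lau (Av m),
      g * (1 - Xm (Av m) 1 0 * Xm (Av m) 0 (-1)) = f - sw (Av m) f →
      T * ι f = ι (sw (Av m) f) * T + algebraMap (Av m) K (qv m - 1) * ι g)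
    (hcyc : ι (fv1 m) = 0)
    (hfree : ∀ h : K, ∃! fg : Lau (Av m) × Lau (Av m),
      Res (Av m) m fg.1 ∧ Res (Av m) m fg.2 ∧ h = ι fg.1 + ι fg.2 * T) :
    ∀ f g : Lau (Av m), Res (Av m) m f → Res (Av m) m g →
      (Commute (ι f + ι g * T) T ↔ (sw (Av m) f = f ∧ sw (Av m) g = g)) := by
  intro f g hf hg
  have hQ1 : algebraMap (Av m) K (qv m - 1) = algebraMap (Av m) K (qv m) - 1 := by
    rw [map_sub, map_one]
  have hT2 : T * T = algebraMap (Av m) K (qv m) * T - T + algebraMap (Av m) K (qv m) := by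
    have h2 : T * T - (algebraMap (Av m) K (qv m) * T - T + algebraMap (Av m) K (qv m))
        = (T - algebraMap (Av m) K (qv m)) * (T + 1) := by noncomm_ring
    exact sub_eq_zero.mp (h2.trans hquad)
  have hXu : Xm (Av m) 1 0 * Xm (Av m) 0 (-1) = Xm (Av m) 1 (-1) := by
    rw [Xm_mul_s12]; norm_num
  have hiCC : ∀ (a : Av m) (p : Lau (Av m)),
      ι (CC (Av m) a * p) = algebraMap (Av m) K a * ι p := by
    intro a p
    rw [map_mul]
    congr 1
    exact ι.commutes a
  constructor
  · intro hC
    have hDf := hcomm f (Dm (Av m) f) (by rw [hXu]; exact Dm_mul (Av m) f)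
    have hDg := hcomm g (Dm (Av m) g) (by rw [hXu]; exact Dm_mul (Av m) g)
    have gT2 : ι g * (T * T) = algebraMap (Av m) K (qv m) * (ι g * T) - ι g * T
        + algebraMap (Av m) K (qv m) * ι g := by
      rw [hT2, mul_add, mul_sub, ← mul_assoc, ← Algebra.commutes, mul_assoc]
    have swgT : ι (sw (Av m) g) * (T * T)
        = algebraMap (Av m) K (qv m) * (ι (sw (Av m) g) * T) - ι (sw (Av m) g) * T
          + algebraMap (Av m) K (qv m) * ι (sw (Av m) g) := by
      rw [hT2, mul_add, mul_sub, ← mul_assoc, ← Algebra.commutes, mul_assoc]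
    have e1 : (ι f + ι g * T) * T
        = ι (CC (Av m) (qv m) * g) + ι (f + CC (Av m) (qv m - 1) * g) * T := by
      conv_lhs => rw [add_mul, mul_assoc, gT2]
      conv_rhs => rw [map_add, hiCC, hiCC, add_mul]
      simp only [hQ1, sub_mul, one_mul, mul_assoc]
      abel
    have e2 : T * (ι f + ι g * T)
        = ι (CC (Av m) (qv m - 1) * Dm (Av m) f + CC (Av m) (qv m) * sw (Av m) g)
          + ι (sw (Av m) f + CC (Av m) (qv m - 1) * sw (Av m) g
              + CC (Av m) (qv m - 1) * Dm (Av m) g) * T := by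
      conv_lhs => rw [mul_add, hDf, ← mul_assoc, hDg, add_mul,
        mul_assoc (ι (sw (Av m) g)), swgT]
      conv_rhs => rw [map_add, map_add, map_add, hiCC, hiCC, hiCC, hiCC, add_mul, add_mul]
      simp only [hQ1, sub_mul, one_mul, mul_assoc]
      abel
    obtain ⟨fg0, hfg0, huni⟩ := hfree ((ι f + ι g * T) * T)
    have r1 : (CC (Av m) (qv m) * g, f + CC (Av m) (qv m - 1) * g) = fg0 :=
      huni _ ⟨Res_CC_mul _ _ hg, Res_add _ hf (Res_CC_mul _ _ hg), e1⟩
    have r2 : (CC (Av m) (qv m - 1) * Dm (Av m) f + CC (Av m) (qv m) * sw (Av m) g,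
        sw (Av m) f + CC (Av m) (qv m - 1) * sw (Av m) g
          + CC (Av m) (qv m - 1) * Dm (Av m) g) = fg0 :=
      huni _ ⟨Res_add _ (Res_CC_mul _ _ (Res_Dm _ hf)) (Res_CC_mul _ _ (Res_sw _ hg)),
        Res_add _ (Res_add _ (Res_sw _ hf) (Res_CC_mul _ _ (Res_sw _ hg)))
          (Res_CC_mul _ _ (Res_Dm _ hg)),
        by rw [hC.eq]; exact e2⟩
    have r12 := r1.trans r2.symm
    have hPe : CC (Av m) (qv m) * g
        = CC (Av m) (qv m - 1) * Dm (Av m) f + CC (Av m) (qv m) * sw (Av m) g :=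
      congrArg Prod.fst r12
    have hQe : f + CC (Av m) (qv m - 1) * g
        = sw (Av m) f + CC (Av m) (qv m - 1) * sw (Av m) g
          + CC (Av m) (qv m - 1) * Dm (Av m) g :=
      congrArg Prod.snd r12
    have h3 := Dm_mul (Av m) f
    have h4 := Dm_mul (Av m) g
    have key : (g - sw (Av m) g) * (CC (Av m) (qv m) * (1 - Xm (Av m) 1 (-1))^2
        - CC (Av m) (qv m - 1)^2 * Xm (Av m) 1 (-1)) = 0 := by
      linear_combination (1 - Xm (Av m) 1 (-1))^2 * hPe
        + CC (Av m) (qv m - 1) * (1 - Xm (Av m) 1 (-1)) * h3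
        + CC (Av m) (qv m - 1) * (1 - Xm (Av m) 1 (-1)) * hQe
        + CC (Av m) (qv m - 1)^2 * h4
    have hb : g - sw (Av m) g = 0 := by
      rcases mul_eq_zero.mp key with h | h
      · exact h
      · exact absurd h (wne m)
    have hEc : CC (Av m) (qv m - 1) ≠ 0 := by
      rw [CC_eq]
      exact fun h => qone m (AddMonoidAlgebra.single_eq_zero.mp h)
    have hDf0 : CC (Av m) (qv m - 1) * Dm (Av m) f = 0 := by
      linear_combination CC (Av m) (qv m) * hb - hPe
    have hDf' : Dm (Av m) f = 0 := by
      rcases mul_eq_zero.mp hDf0 with h | h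
      · exact absurd h hEc
      · exact h
    have ha : f - sw (Av m) f = 0 := by rw [← h3, hDf', zero_mul]
    exact ⟨(sub_eq_zero.mp ha).symm, (sub_eq_zero.mp hb).symm⟩
  · rintro ⟨hsf, hsg⟩
    have hf' := hcomm f 0 (by rw [hsf]; simp)
    have hg' := hcomm g 0 (by rw [hsg]; simp)
    rw [hsf, map_zero, mul_zero, add_zero] at hf'
    rw [hsg, map_zero, mul_zero, add_zero] at hg'
    show (ι f + ι g * T) * T = T * (ι f + ι g * T)
    rw [mul_add, hf', ← mul_assoc, hg', add_mul]
end
end
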